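/- Let f : [0,∞) → [0,∞) be a function such that f(μ+1)f(μ+β) − f(μ)f(μ+1+β) ≥ 0 for all μ, β ≥ 0. Then for every positive integer α and all μ, β ≥ 0, one has f(μ+α)f(μ+β) − f(μ)f(μ+α+β) ≥ 0. -/
import Mathlib
set_option maxHeartbeats 1000000


theorem stmt_2 (f : ℝ → ℝ) (hf : ∀ x, 0 ≤ x → 0 ≤ f x)
    (h : ∀ μ β : ℝ, 0 ≤ μ → 0 ≤ β →
      0 ≤ f (μ + 1) * f (μ + β) - f μ * f (μ + 1 + β)) :
    ∀ (α : ℕ), 1 ≤ α → ∀ μ β : ℝ, 0 ≤ μ → 0 ≤ β →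
      0 ≤ f (μ + α) * f (μ + β) - f μ * f (μ + α + β) := by
  intro α hα
  induction α with
  | zero => omega
  | succ n ih =>
    intro μ β hμ hβ
    push_cast
    rcases Nat.eq_zero_or_pos n with h0 | hn
    · subst h0
      push_cast
      simpa using h μ β hμ hβ
    · have hn1 : (1:ℕ) ≤ n := hn
      have IH := ih hn1
      have hnr : (0:ℝ) ≤ (n:ℝ) := Nat.cast_nonneg n
      have A : 0 ≤ f (μ + n) * f (μ + β) - f μ * f (μ + n + β) := IH μ β hμ hβ
      have A' : 0 ≤ f (μ + n) * f (μ + (β+1)) - f μ * f (μ + n + (β+1)) :=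
        IH μ (β+1) hμ (by linarith)
      have B : 0 ≤ f (μ + n + 1) * f (μ + n + β) - f (μ + n) * f (μ + n + 1 + β) :=
        h (μ + n) β (by linarith) hβ
      have C : 0 ≤ f (μ + 1) * f (μ + (n + β)) - f μ * f (μ + 1 + (n + β)) :=
        h μ (n + β) hμ (by linarith)
      have e1 : μ + n + (β+1) = μ + (n+1) + β := by ring
      have e2 : μ + (n+β) = μ + n + β := by ring
      have e3 : μ + 1 + (n+β) = μ + (n+1) + β := by ring
      have e4 : μ + n + 1 + β = μ + (n+1) + β := by ring
      have e5 : μ + n + 1 = μ + (n+1) := by ring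
      rw [e1] at A'
      rw [e2, e3] at C
      rw [e4, e5] at B
      -- notation
      set a := f (μ + n) with ha
      set b := f (μ + β) with hb
      set c := f μ with hc
      set d := f (μ + n + β) with hd
      set e := f (μ + ((n:ℝ)+1)) with he
      set g := f (μ + ((n:ℝ)+1) + β) with hg
      have ha0 : 0 ≤ a := hf _ (by linarith)
      have hb0 : 0 ≤ b := hf _ (by linarith)
      have hc0 : 0 ≤ c := hf _ hμ
      have hd0 : 0 ≤ d := hf _ (by linarith)
      have he0 : 0 ≤ e := hf _ (by linarith)
      have hg0 : 0 ≤ g := hf _ (by linarith)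
      -- goal : 0 ≤ e * b - c * g
      rcases eq_or_lt_of_le ha0 with haz | hap
      · -- a = 0 : from A', c * f(μ+(n+1)+β) ≤ 0
        have : c * g ≤ 0 := by
          have := A'
          nlinarith [hf (μ + (β+1)) (by linarith)]
        nlinarith
      rcases eq_or_lt_of_le hd0 with hdz | hdp
      · -- d = 0 : from C, c * g ≤ 0
        have : c * g ≤ 0 := by nlinarith [hf (μ+1) (by linarith : (0:ℝ) ≤ μ+1)]
        nlinarith
      -- positive case: (e*d)*(a*b) ≥ (a*g)*(c*d), cancel a*d > 0
      have hA : c * d ≤ a * b := by linarith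
      have hB : a * g ≤ e * d := by linarith
      have key : (a * g) * (c * d) ≤ (e * d) * (a * b) :=
        mul_le_mul hB hA (mul_nonneg hc0 hd0) (mul_nonneg he0 hd0)
      have had : 0 < a * d := mul_pos hap hdp
      have key2 : (a * d) * (c * g) ≤ (a * d) * (e * b) := by
        calc (a * d) * (c * g) = (a * g) * (c * d) := by ring
          _ ≤ (e * d) * (a * b) := key
          _ = (a * d) * (e * b) := by ring
      have := le_of_mul_le_mul_left key2 had
      linarith
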